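/- Let $(R,\mathfrak{m}) \to (S,\mathfrak{n})$ be a faithfully flat local homomorphism of Noetherian local rings, and let $N$ and $P$ be finitely generated $R$-modules such that $S \otimes_R N$ is a direct summand of $S \otimes_R P$. Then $N$ is a direct summand of $P^b$ for some positive integer $b$. -/

import Mathlib

open IsLocalRing CategoryTheory

noncomputable section

/-- The depth of a module over a local ring: the supremum of lengths of
regular sequences contained in the maximal ideal. -/
def moduleDepth (R M : Type) [CommRing R] [IsLocalRing R]
    [AddCommGroup M] [Module R M] : ℕ∞ :=
  sSup {n : ℕ∞ | ∃ rs : List R, (rs.length : ℕ∞) = n ∧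
    (∀ r ∈ rs, r ∈ maximalIdeal R) ∧ RingTheory.Sequence.IsRegular M rs}

/-- A maximal Cohen-Macaulay module over a local ring: finitely generated, nonzero,
with depth equal to the Krull dimension of the ring. -/
def IsMCM (R M : Type) [CommRing R] [IsLocalRing R]
    [AddCommGroup M] [Module R M] : Prop :=
  Module.Finite R M ∧ Nontrivial M ∧ (moduleDepth R M : WithBot ℕ∞) = ringKrullDim R

/-- A Cohen-Macaulay local ring. -/
def IsCMLocalRing (R : Type) [CommRing R] [IsLocalRing R] : Prop :=
  (moduleDepth R R : WithBot ℕ∞) = ringKrullDim R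

/-- The Ext group `Ext^n_R(M, N)` as an `R`-module. -/
def ExtMod (R : Type) [CommRing R] (n : ℕ) (M N : Type)
    [AddCommGroup M] [Module R M] [AddCommGroup N] [Module R N] : Type :=
  ((Ext R (ModuleCat R) n).obj (Opposite.op (ModuleCat.of R M))).obj (ModuleCat.of R N)

instance (R : Type) [CommRing R] (n : ℕ) (M N : Type)
    [AddCommGroup M] [Module R M] [AddCommGroup N] [Module R N] :
    AddCommGroup (ExtMod R n M N) := by
  unfold ExtMod; infer_instance

instance (R : Type) [CommRing R] (n : ℕ) (M N : Type)
    [AddCommGroup M] [Module R M] [AddCommGroup N] [Module R N] :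
    Module R (ExtMod R n M N) := by
  unfold ExtMod; infer_instance

/-- An indecomposable module. -/
def IsIndecomposable (R M : Type) [CommRing R] [AddCommGroup M] [Module R M] : Prop :=
  Nontrivial M ∧ ∀ N₁ N₂ : Submodule R M, IsCompl N₁ N₂ → N₁ = ⊥ ∨ N₂ = ⊥

/-- Countable Cohen-Macaulay type: there is a countable set of finitely presented
modules containing, up to isomorphism, all maximal Cohen-Macaulay modules. -/
def HasCountableCMType (R : Type) [CommRing R] [IsLocalRing R] : Prop :=
  ∃ S : Set (Σ n : ℕ, Submodule R (Fin n → R)), S.Countable ∧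
    ∀ (M : Type) [AddCommGroup M] [Module R M], IsMCM R M →
      ∃ s ∈ S, Nonempty (M ≃ₗ[R] ((Fin s.1 → R) ⧸ s.2))

/-- Injective dimension at most `n`, via vanishing of Ext. -/
def HasInjDimLE (R Y : Type) [CommRing R] [AddCommGroup Y] [Module R Y] (n : ℕ) : Prop :=
  ∀ (M : Type) [AddCommGroup M] [Module R M] (i : ℕ), n < i → Subsingleton (ExtMod R i M Y)

/-- Finite injective dimension. -/
def HasFiniteInjDim (R Y : Type) [CommRing R] [AddCommGroup Y] [Module R Y] : Prop :=
  ∃ n, HasInjDimLE R Y n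

/-- A regular local ring: Noetherian local, whose maximal ideal is generated by
`dim R` elements. -/
def IsRegularLocalRing' (A : Type) [CommRing A] : Prop :=
  IsNoetherianRing A ∧ ∃ h : IsLocalRing A, ∃ s : Finset A,
    Ideal.span (s : Set A) = @IsLocalRing.maximalIdeal A _ h ∧
    ((s.card : ℕ∞) : WithBot ℕ∞) = ringKrullDim A

/-- A catenary ring: any two saturated chains of primes with the same endpoints
have the same length. -/
def IsCatenaryRing (A : Type) [CommRing A] : Prop :=
  ∀ c d : RelSeries {p : PrimeSpectrum A × PrimeSpectrum A | p.1 ⋖ p.2},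
    c.head = d.head → c.last = d.last → c.length = d.length

/-- A regular (not necessarily local) Noetherian ring: all localizations at primes
are regular local rings. -/
def IsRegularRing' (A : Type) [CommRing A] : Prop :=
  ∀ p : PrimeSpectrum A, IsRegularLocalRing' (Localization.AtPrime p.asIdeal)

/-- An excellent local ring: Noetherian, universally catenary, J-2 (regular loci of
finite type algebras are open), with geometrically regular formal fibres. -/
def IsExcellentLocalRing (R : Type) [CommRing R] [IsLocalRing R] : Prop :=
  IsNoetherianRing R ∧
  (∀ n : ℕ, IsCatenaryRing (MvPolynomial (Fin n) R)) ∧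
  (∀ (A : Type) [CommRing A] [Algebra R A], Algebra.FiniteType R A →
      IsOpen {p : PrimeSpectrum A | IsRegularLocalRing' (Localization.AtPrime p.asIdeal)}) ∧
  (∀ p : PrimeSpectrum R,
    ∀ (L : Type) [Field L] [Algebra (ResidueField (Localization.AtPrime p.asIdeal)) L],
      FiniteDimensional (ResidueField (Localization.AtPrime p.asIdeal)) L →
      letI : Algebra R L := ((algebraMap (ResidueField (Localization.AtPrime p.asIdeal)) L).comp
        (algebraMap R (ResidueField (Localization.AtPrime p.asIdeal)))).toAlgebra
      IsRegularRing' (TensorProduct R L (AdicCompletion (maximalIdeal R) R)))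

/-- A free resolution of `M` by finitely generated free modules. -/
structure FreeRes (R : Type) [CommRing R] (M : Type) [AddCommGroup M] [Module R M] where
  rank : ℕ → ℕ
  aug : (Fin (rank 0) → R) →ₗ[R] M
  d : (i : ℕ) → ((Fin (rank (i+1)) → R) →ₗ[R] (Fin (rank i) → R))
  aug_surjective : Function.Surjective aug
  exact_zero : LinearMap.range (d 0) = LinearMap.ker aug
  exact_succ : ∀ i, LinearMap.range (d (i+1)) = LinearMap.ker (d i)

/-- A minimal free resolution over a local ring. -/
structure MinFreeRes (R : Type) [CommRing R] [IsLocalRing R]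
    (M : Type) [AddCommGroup M] [Module R M] extends FreeRes R M where
  minimal_aug : LinearMap.ker aug ≤ (maximalIdeal R) • ⊤
  minimal : ∀ i, LinearMap.range (d i) ≤ (maximalIdeal R) • ⊤

/-- `S` is (isomorphic to) the `n`-th syzygy of `M` in the given free resolution;
the `0`-th syzygy is `M` itself, and for `n ≥ 1` it is the image of `d (n-1)`. -/
def FreeRes.IsSyzygy {R : Type} [CommRing R] {M : Type} [AddCommGroup M] [Module R M]
    (F : FreeRes R M) (n : ℕ) (S : Type) [AddCommGroup S] [Module R S] : Prop :=
  match n with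
  | 0 => Nonempty (S ≃ₗ[R] M)
  | k+1 => Nonempty (S ≃ₗ[R] LinearMap.range (F.d k))

/-- A canonical module for a Cohen-Macaulay local ring: a maximal Cohen-Macaulay
module of finite injective dimension whose endomorphism ring is `R`. -/
def HasCanonicalModule (R : Type) [CommRing R] [IsLocalRing R] : Prop :=
  ∃ ω : ModuleCat R, Module.Finite R ω ∧ IsMCM R ω ∧ HasFiniteInjDim R ω ∧
    Nonempty (Module.End R ω ≃ₐ[R] R)

/-- The height of an ideal: the infimum of dimensions of localizations at primes
containing it. -/
def idealHeight (R : Type) [CommRing R] (J : Ideal R) : WithBot ℕ∞ :=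
  sInf {h | ∃ p : PrimeSpectrum R, J ≤ p.asIdeal ∧
    h = ringKrullDim (Localization.AtPrime p.asIdeal)}

end



open TensorProduct

namespace WiegandAux

section HomExact

variable {A F G M X : Type*} [CommRing A]
  [AddCommGroup F] [Module A F] [AddCommGroup G] [Module A G]
  [AddCommGroup M] [Module A M] [AddCommGroup X] [Module A X]

theorem hom_lcomp_injective (p : F →ₗ[A] M) (hp : Function.Surjective p) :
    Function.Injective (LinearMap.lcomp A X p) := by
  intro f g hfg
  ext z
  obtain ⟨x, rfl⟩ := hp z
  exact DFunLike.congr_fun hfg x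

theorem hom_lcomp_exact (d : G →ₗ[A] F) (p : F →ₗ[A] M)
    (hp : Function.Surjective p) (hdp : Function.Exact d p) :
    Function.Exact (LinearMap.lcomp A X p) (LinearMap.lcomp A X d) := by
  intro y
  constructor
  · intro hy
    have hker : LinearMap.ker p ≤ LinearMap.ker y := by
      intro x hx
      rw [LinearMap.exact_iff.mp hdp] at hx
      obtain ⟨g, rfl⟩ := hx
      have := DFunLike.congr_fun hy g
      simpa using this
    refine ⟨((LinearMap.ker p).liftQ y hker) ∘ₗ
      (p.quotKerEquivOfSurjective hp).symm.toLinearMap, ?_⟩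
    ext x
    have h1 : (p.quotKerEquivOfSurjective hp).symm (p x) = Submodule.Quotient.mk x := by
      apply (p.quotKerEquivOfSurjective hp).injective
      rw [LinearEquiv.apply_symm_apply]
      rfl
    simp [LinearMap.lcomp_apply, h1]
  · rintro ⟨f, rfl⟩
    ext x
    simp [hdp.apply_apply_eq_zero]

end HomExact

section Phi

variable {R S : Type*} [CommRing R] [CommRing S] [Algebra R S]
variable {M M' X : Type*} [AddCommGroup M] [Module R M] [AddCommGroup X] [Module R X]
  [AddCommGroup M'] [Module R M']

theorem Phi_tmul (s : S) (f : M →ₗ[R] X) :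
    LinearMap.tensorProduct R S M X (s ⊗ₜ f) = s • f.baseChange S := by
  simp [LinearMap.tensorProduct]

theorem Phi_natural (e : M' →ₗ[R] M) (w : S ⊗[R] (M →ₗ[R] X)) :
    LinearMap.tensorProduct R S M' X ((LinearMap.lcomp R X e).lTensor S w)
      = (LinearMap.tensorProduct R S M X w) ∘ₗ e.baseChange S := by
  induction w using TensorProduct.induction_on with
  | zero => simp
  | tmul s f =>
      rw [LinearMap.lTensor_tmul, Phi_tmul, Phi_tmul, LinearMap.lcomp_apply',
        LinearMap.baseChange_comp, LinearMap.smul_comp]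
  | add x y hx hy => rw [map_add, map_add, map_add, hx, hy, LinearMap.add_comp]

theorem Phi_free_bijective (n : ℕ) :
    Function.Bijective (LinearMap.tensorProduct R S (Fin n → R) X) := by
  classical
  set Φ := LinearMap.tensorProduct R S (Fin n → R) X with hPhi
  let ι : Fin n → (X →ₗ[R] ((Fin n → R) →ₗ[R] X)) := fun i =>
    LinearMap.smulRightₗ (LinearMap.proj i)
  let Ψ : ((S ⊗[R] (Fin n → R)) →ₗ[S] S ⊗[R] X) → S ⊗[R] ((Fin n → R) →ₗ[R] X) :=
    fun h => ∑ i, (ι i).baseChange S (h ((1 : S) ⊗ₜ Pi.single i 1))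
  have key : ∀ (i j : Fin n) (y : S ⊗[R] X),
      Φ ((ι i).baseChange S y) ((1 : S) ⊗ₜ Pi.single j (1 : R))
        = if i = j then y else 0 := by
    intro i j y
    induction y using TensorProduct.induction_on with
    | zero => simp
    | tmul s x =>
        rw [LinearMap.baseChange_tmul, Phi_tmul, LinearMap.smul_apply,
          LinearMap.baseChange_tmul]
        by_cases hij : i = j
        · subst hij
          simp [ι, smul_tmul']
        · have h0 : (Pi.single j (1:R) : Fin n → R) i = 0 := by
            rw [Pi.single_eq_of_ne hij]
          simp [ι, h0, hij]
    | add a b ha hb =>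
        rw [map_add, map_add, LinearMap.add_apply, ha, hb]
        split_ifs <;> simp
  have ext1 : ∀ (h1 h2 : (S ⊗[R] (Fin n → R)) →ₗ[S] S ⊗[R] X),
      (∀ j : Fin n, h1 ((1:S) ⊗ₜ (Pi.single j (1:R) : Fin n → R))
        = h2 ((1:S) ⊗ₜ (Pi.single j (1:R) : Fin n → R))) → h1 = h2 := by
    intro h1 h2 hcomp
    apply LinearMap.ext
    intro z
    induction z using TensorProduct.induction_on with
    | zero => simp
    | tmul s v =>
        have h2' : ∀ j, v j • ((1:S) ⊗ₜ[R] (Pi.single j (1:R) : Fin n → R))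
            = (1:S) ⊗ₜ[R] (Pi.single j (v j) : Fin n → R) := by
          intro j
          rw [← TensorProduct.tmul_smul]
          congr 1
          rw [← Pi.single_smul, smul_eq_mul, mul_one]
        have h1v : ((1:S) ⊗ₜ[R] v : S ⊗[R] (Fin n → R))
            = ∑ j, v j • ((1:S) ⊗ₜ[R] (Pi.single j (1:R) : Fin n → R)) := by
          rw [Finset.sum_congr rfl fun j _ => h2' j, ← TensorProduct.tmul_sum,
            Finset.univ_sum_single]
        have hv : (s ⊗ₜ[R] v : S ⊗[R] (Fin n → R)) = s • ((1:S) ⊗ₜ[R] v) := by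
          rw [TensorProduct.smul_tmul', smul_eq_mul, mul_one]
        rw [hv, map_smul, map_smul, h1v, map_sum, map_sum]
        congr 1
        exact Finset.sum_congr rfl fun j _ => by
          rw [LinearMap.map_smul_of_tower, LinearMap.map_smul_of_tower, hcomp j]
    | add a b ha hb => rw [map_add, map_add, ha, hb]
  have right_inv : ∀ h, Φ (Ψ h) = h := by
    intro h
    refine ext1 _ _ fun j => ?_
    show Φ (∑ i, (ι i).baseChange S (h ((1 : S) ⊗ₜ Pi.single i 1))) _ = _
    rw [map_sum, LinearMap.sum_apply, Finset.sum_congr rfl (fun i _ => key i j _)]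
    simp
  have psi_add : ∀ h1 h2, Ψ (h1 + h2) = Ψ h1 + Ψ h2 := by
    intro h1 h2
    simp only [Ψ, LinearMap.add_apply, map_add, Finset.sum_add_distrib]
  have left_inv : ∀ z, Ψ (Φ z) = z := by
    intro z
    induction z using TensorProduct.induction_on with
    | zero => simp [Ψ]
    | tmul s f =>
        have hsum : ∑ i, (ι i) (f ((Pi.single i (1:R) : Fin n → R))) = f := by
          apply LinearMap.ext
          intro v
          rw [LinearMap.sum_apply]
          simp only [ι, LinearMap.smulRightₗ_apply, LinearMap.proj_apply]
          conv_rhs => rw [← Finset.univ_sum_single v, map_sum]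
          refine Finset.sum_congr rfl fun i _ => ?_
          simp only [LinearMap.smulRight_apply, LinearMap.proj_apply]
          rw [← map_smul]
          congr 1
          rw [← Pi.single_smul, smul_eq_mul, mul_one]
        have hterm : ∀ i : Fin n, (ι i).baseChange S
            ((Φ (s ⊗ₜ f)) ((1:S) ⊗ₜ (Pi.single i (1:R) : Fin n → R)))
            = s ⊗ₜ[R] (ι i) (f ((Pi.single i (1:R) : Fin n → R))) := by
          intro i
          rw [Phi_tmul, LinearMap.smul_apply, LinearMap.baseChange_tmul,
            TensorProduct.smul_tmul', smul_eq_mul, mul_one, LinearMap.baseChange_tmul]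
        show ∑ i, (ι i).baseChange S ((Φ (s ⊗ₜ f)) ((1:S) ⊗ₜ (Pi.single i (1:R) : Fin n → R))) = s ⊗ₜ f
        rw [Finset.sum_congr rfl fun i _ => hterm i, ← TensorProduct.tmul_sum, hsum]
    | add a b ha hb => rw [map_add, psi_add, ha, hb]
  exact Function.bijective_iff_has_inverse.mpr ⟨Ψ, left_inv, right_inv⟩

theorem Phi_bijective [Module.Flat R S] [IsNoetherianRing R]
    (M X : Type*) [AddCommGroup M] [Module R M] [Module.Finite R M]
    [AddCommGroup X] [Module R X] :
    Function.Bijective (LinearMap.tensorProduct R S M X) := by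
  classical
  obtain ⟨n, p, hp⟩ := Module.Finite.exists_fin' R M
  haveI : Module.Finite R (LinearMap.ker p) :=
    ⟨(Submodule.fg_top _).2 (IsNoetherian.noetherian _)⟩
  obtain ⟨m, q, hq⟩ := Module.Finite.exists_fin' R (LinearMap.ker p)
  set d : (Fin m → R) →ₗ[R] (Fin n → R) := (LinearMap.ker p).subtype ∘ₗ q with hd
  have hdp : Function.Exact d p := by
    rw [LinearMap.exact_iff, hd, LinearMap.range_comp, LinearMap.range_eq_top.2 hq,
      Submodule.map_top, Submodule.range_subtype]
  have hinj : Function.Injective (LinearMap.lcomp R X p) := hom_lcomp_injective p hp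
  have hex : Function.Exact (LinearMap.lcomp R X p) (LinearMap.lcomp R X d) :=
    hom_lcomp_exact d p hp hdp
  have hinjS : Function.Injective ((LinearMap.lcomp R X p).lTensor S) :=
    Module.Flat.lTensor_preserves_injective_linearMap _ hinj
  have hexS : Function.Exact ((LinearMap.lcomp R X p).lTensor S)
      ((LinearMap.lcomp R X d).lTensor S) :=
    Module.Flat.lTensor_exact S hex
  have hpS : Function.Surjective (p.baseChange S) :=
    LinearMap.lTensor_surjective S hp
  have hinj' : Function.Injective (LinearMap.lcomp S (S ⊗[R] X) (p.baseChange S)) :=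
    hom_lcomp_injective _ hpS
  have hpd0 : p ∘ₗ d = 0 :=
    LinearMap.ext fun x => by simpa using hdp.apply_apply_eq_zero x
  constructor
  · intro w w' hww
    apply hinjS
    apply (Phi_free_bijective (R := R) (S := S) (X := X) n).injective
    rw [Phi_natural, Phi_natural, hww]
  · intro h
    obtain ⟨u, hu⟩ := (Phi_free_bijective (R := R) (S := S) (X := X) n).surjective
      (h ∘ₗ p.baseChange S)
    have h0 : (LinearMap.lcomp R X d).lTensor S u = 0 := by
      apply (Phi_free_bijective (R := R) (S := S) (X := X) m).injective
      rw [Phi_natural, hu, map_zero, LinearMap.comp_assoc, ← LinearMap.baseChange_comp,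
        hpd0]
      simp
    obtain ⟨w, hw⟩ := (hexS u).mp h0
    refine ⟨w, ?_⟩
    apply hinj'
    show (LinearMap.tensorProduct R S M X w) ∘ₗ p.baseChange S = h ∘ₗ p.baseChange S
    rw [← Phi_natural, hw, hu]

end Phi

section FFlat

variable {R S : Type*} [CommRing R] [CommRing S] [Algebra R S]

theorem eq_zero_of_one_tmul_eq_zero [Module.FaithfullyFlat R S]
    {Q : Type*} [AddCommGroup Q] [Module R Q] (x : Q)
    (hx : (1 : S) ⊗ₜ[R] x = 0) : x = 0 := by
  have h : LinearMap.lTensor S (LinearMap.toSpanSingleton R Q x) = 0 := by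
    apply LinearMap.ext
    intro z
    induction z using TensorProduct.induction_on with
    | zero => simp
    | tmul s r =>
        have hs : (s ⊗ₜ[R] x : S ⊗[R] Q) = s • ((1:S) ⊗ₜ[R] x) := by
          rw [TensorProduct.smul_tmul', smul_eq_mul, mul_one]
        rw [LinearMap.lTensor_tmul, LinearMap.zero_apply, LinearMap.toSpanSingleton_apply,
          TensorProduct.tmul_smul, hs, hx, smul_zero, smul_zero]
    | add a b ha hb =>
        rw [map_add, ha, hb]
        simp
  have h2 := (Module.FaithfullyFlat.zero_iff_lTensor_zero R S
    (LinearMap.toSpanSingleton R Q x)).mpr h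
  simpa using DFunLike.congr_fun h2 1

theorem exists_fin_tmul {A B : Type*} [AddCommGroup A] [Module R A] [AddCommGroup B] [Module R B]
    (x : A ⊗[R] B) : ∃ (k : ℕ) (a : Fin k → A) (b : Fin k → B), x = ∑ i, a i ⊗ₜ[R] b i := by
  induction x using TensorProduct.induction_on with
  | zero => exact ⟨0, ![], ![], by simp⟩
  | tmul a b => exact ⟨1, ![a], ![b], by simp⟩
  | add x y hx hy =>
      obtain ⟨k, a, b, rfl⟩ := hx
      obtain ⟨l, c, e, rfl⟩ := hy
      refine ⟨k + l, Fin.append a c, Fin.append b e, ?_⟩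
      rw [Fin.sum_univ_add]
      simp [Fin.append_left, Fin.append_right]

end FFlat

end WiegandAux

open TensorProduct in
open WiegandAux in
/-- Wiegand's descent lemma for the plus category. -/
theorem wiegand_plus_category_descent (R S : Type) [CommRing R] [IsLocalRing R]
    [IsNoetherianRing R] [CommRing S] [IsLocalRing S] [IsNoetherianRing S] [Algebra R S]
    [IsLocalHom (algebraMap R S)] [Module.FaithfullyFlat R S]
    (N P : Type) [AddCommGroup N] [Module R N] [Module.Finite R N]
    [AddCommGroup P] [Module R P] [Module.Finite R P]
    (h : ∃ W : ModuleCat S,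
      Nonempty ((TensorProduct R S N × W) ≃ₗ[S] TensorProduct R S P)) :
    ∃ b : ℕ, 0 < b ∧ ∃ C : ModuleCat R,
      Nonempty ((N × C) ≃ₗ[R] (Fin b → P)) := by
  classical
  obtain ⟨W, ⟨e⟩⟩ := h
  set Gmap : S ⊗[R] N →ₗ[S] S ⊗[R] P :=
    e.toLinearMap ∘ₗ LinearMap.inl S (S ⊗[R] N) W with hGmap
  set Fmap : S ⊗[R] P →ₗ[S] S ⊗[R] N :=
    LinearMap.fst S (S ⊗[R] N) W ∘ₗ e.symm.toLinearMap with hFmap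
  have hFGid : Fmap ∘ₗ Gmap = LinearMap.id := by
    apply LinearMap.ext
    intro x
    simp [hFmap, hGmap]
  obtain ⟨a, ha⟩ := (Phi_bijective (S := S) P N).surjective Fmap
  obtain ⟨b0, hb0⟩ := (Phi_bijective (S := S) N P).surjective Gmap
  obtain ⟨k, s, f, rfl⟩ := exists_fin_tmul a
  obtain ⟨l, t, g, rfl⟩ := exists_fin_tmul b0
  have hF : Fmap = ∑ i, s i • (f i).baseChange S := by
    rw [← ha, map_sum]
    exact Finset.sum_congr rfl fun i _ => Phi_tmul (s i) (f i)
  have hG : Gmap = ∑ j, t j • (g j).baseChange S := by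
    rw [← hb0, map_sum]
    exact Finset.sum_congr rfl fun j _ => Phi_tmul (t j) (g j)
  have compdist : Fmap ∘ₗ Gmap = ∑ i : Fin k, ∑ j : Fin l,
      (s i • (f i).baseChange S) ∘ₗ (t j • (g j).baseChange S) := by
    have h0 : Fmap ∘ₗ Gmap
        = LinearMap.llcomp S (S ⊗[R] N) (S ⊗[R] P) (S ⊗[R] N) Fmap Gmap := rfl
    rw [h0, hF, hG, map_sum]
    have hswap : ∀ x : Fin l, (LinearMap.llcomp S (S ⊗[R] N) (S ⊗[R] P) (S ⊗[R] N))
        (∑ i, s i • (f i).baseChange S) (t x • (g x).baseChange S)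
        = ∑ i, (s i • (f i).baseChange S) ∘ₗ (t x • (g x).baseChange S) := by
      intro x
      rw [map_sum, LinearMap.sum_apply]
      rfl
    rw [Finset.sum_congr rfl fun x _ => hswap x, Finset.sum_comm]
  have key : (∑ i : Fin k, ∑ j : Fin l,
        ((s i * t j) ⊗ₜ[R] (f i ∘ₗ g j) : S ⊗[R] (N →ₗ[R] N)))
      = (1 : S) ⊗ₜ[R] (LinearMap.id : N →ₗ[R] N) := by
    apply (Phi_bijective (S := S) N N).injective
    have hL : LinearMap.tensorProduct R S N N (∑ i : Fin k, ∑ j : Fin l,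
        ((s i * t j) ⊗ₜ[R] (f i ∘ₗ g j))) = Fmap ∘ₗ Gmap := by
      rw [map_sum, compdist]
      refine Finset.sum_congr rfl fun i _ => ?_
      rw [map_sum]
      refine Finset.sum_congr rfl fun j _ => ?_
      rw [Phi_tmul, LinearMap.baseChange_comp, mul_smul, LinearMap.smul_comp,
        LinearMap.comp_smul]
    rw [hL, hFGid, Phi_tmul, one_smul, LinearMap.baseChange_id]
  set I : Submodule R (N →ₗ[R] N) := Submodule.span R
    {h0 : N →ₗ[R] N | ∃ (u : P →ₗ[R] N) (v : N →ₗ[R] P), h0 = u ∘ₗ v} with hI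
  have hone : (1:S) ⊗ₜ[R] (I.mkQ LinearMap.id) = 0 := by
    have hkey := congrArg (LinearMap.lTensor S I.mkQ) key
    simp only [map_sum, LinearMap.lTensor_tmul] at hkey
    rw [← hkey]
    refine Finset.sum_eq_zero fun i _ => Finset.sum_eq_zero fun j _ => ?_
    have : I.mkQ (f i ∘ₗ g j) = 0 := by
      rw [Submodule.mkQ_apply, Submodule.Quotient.mk_eq_zero]
      exact Submodule.subset_span ⟨f i, g j, rfl⟩
    rw [this, TensorProduct.tmul_zero]
  have hidmem : (LinearMap.id : N →ₗ[R] N) ∈ I := by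
    have h2 := eq_zero_of_one_tmul_eq_zero (S := S) _ hone
    rwa [Submodule.mkQ_apply, Submodule.Quotient.mk_eq_zero] at h2
  have hrep : ∀ h0 : N →ₗ[R] N, h0 ∈ I → ∃ (c : ℕ) (u : Fin c → (P →ₗ[R] N))
      (v : Fin c → (N →ₗ[R] P)), h0 = ∑ i, u i ∘ₗ v i := by
    intro h0 hh0
    induction hh0 using Submodule.span_induction with
    | mem x hx =>
        obtain ⟨u, v, rfl⟩ := hx
        exact ⟨1, ![u], ![v], by simp⟩
    | zero => exact ⟨0, ![], ![], by simp⟩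
    | add x y _ _ ihx ihy =>
        obtain ⟨c, u, v, rfl⟩ := ihx
        obtain ⟨c', u', v', rfl⟩ := ihy
        refine ⟨c + c', Fin.append u u', Fin.append v v', ?_⟩
        rw [Fin.sum_univ_add]
        simp [Fin.append_left, Fin.append_right]
    | smul r x _ ihx =>
        obtain ⟨c, u, v, rfl⟩ := ihx
        refine ⟨c, fun i => r • u i, v, ?_⟩
        rw [Finset.smul_sum]
        exact Finset.sum_congr rfl fun i _ => (LinearMap.smul_comp r (u i) (v i)).symm
  obtain ⟨c, u, v, hid⟩ := hrep _ hidmem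
  set u' : Fin (c+1) → (P →ₗ[R] N) := Fin.snoc u 0 with hu'
  set v' : Fin (c+1) → (N →ₗ[R] P) := Fin.snoc v 0 with hv'
  have hid' : ∑ i, u' i ∘ₗ v' i = LinearMap.id := by
    rw [Fin.sum_univ_castSucc]
    simp only [hu', hv', Fin.snoc_castSucc, Fin.snoc_last, LinearMap.comp_zero]
    rw [← hid, add_zero]
  set Gm : N →ₗ[R] (Fin (c+1) → P) := LinearMap.pi v' with hGm
  set Fm : (Fin (c+1) → P) →ₗ[R] N := ∑ i, u' i ∘ₗ LinearMap.proj i with hFm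
  have hFmGm : ∀ x : N, Fm (Gm x) = x := by
    intro x
    rw [hFm, LinearMap.sum_apply]
    have hterm : ∀ i, (u' i ∘ₗ LinearMap.proj i) (Gm x) = (u' i ∘ₗ v' i) x := by
      intro i
      simp [hGm, LinearMap.pi_apply]
    rw [Finset.sum_congr rfl fun i _ => hterm i, ← LinearMap.sum_apply, hid',
      LinearMap.id_apply]
  set Dm : (Fin (c+1) → P) →ₗ[R] (Fin (c+1) → P) :=
    LinearMap.id - Gm ∘ₗ Fm with hDm
  have hker : ∀ y, Dm y ∈ LinearMap.ker Fm := by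
    intro y
    rw [LinearMap.mem_ker, hDm, LinearMap.sub_apply, LinearMap.id_apply,
      LinearMap.comp_apply, map_sub, hFmGm, sub_self]
  have E : (N × ↥(LinearMap.ker Fm)) ≃ₗ[R] (Fin (c+1) → P) := by
    refine LinearEquiv.ofLinear
      (LinearMap.coprod Gm (LinearMap.ker Fm).subtype)
      (LinearMap.prod Fm (LinearMap.codRestrict (LinearMap.ker Fm) Dm hker)) ?_ ?_
    · apply LinearMap.ext
      intro y
      show Gm (Fm y) + Dm y = y
      rw [hDm, LinearMap.sub_apply, LinearMap.id_apply, LinearMap.comp_apply]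
      abel
    · apply LinearMap.ext
      rintro ⟨x, z⟩
      have hz : Fm z.1 = 0 := LinearMap.mem_ker.mp z.2
      have h1 : Fm (Gm x + z.1) = x := by rw [map_add, hFmGm, hz, add_zero]
      have h2 : Dm (Gm x + z.1) = z.1 := by
        rw [hDm, LinearMap.sub_apply, LinearMap.id_apply, LinearMap.comp_apply, h1]
        abel
      refine Prod.ext ?_ ?_
      · show Fm (Gm x + z.1) = x
        exact h1
      · apply Subtype.ext
        show Dm (Gm x + z.1) = z.1
        exact h2
  exact ⟨c+1, Nat.succ_pos c, ModuleCat.of R (ULift ↥(LinearMap.ker Fm)),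
    ⟨((LinearEquiv.refl R N).prodCongr (ULift.moduleEquiv
      (R := R) (M := ↥(LinearMap.ker Fm)))).trans E⟩⟩
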